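/- arXiv:1801.04549 — 5 statements merged into one kernel-verified Lean document; each statement's English description precedes it below -/
import Mathlib

section
/- Let k₁, k₂ ∈ ℕ, l ∈ ℝ₊^{k₁}, and fix a norm on ℝ^{k₂}. Let f : ℝ^{k₁} → ℝ^{k₂} be a continuous l-homogeneous function such that f(x) = 0 only when x = 0. Then there exists c₂ > 0 such that ‖x‖_l ≤ c₂·‖f(x)‖ for all x ∈ ℝ^{k₁}, where ‖x‖_l = max_i |x_i|^{1/l_i}. -/
open scoped BigOperators

/-- `f` is `l`-homogeneous: `f (a^{l₁} x₁, …, a^{l_{k₁}} x_{k₁}) = a • f x` for all `a ≥ 0`. -/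
def IsLHomogeneous {k₁ k₂ : ℕ} (l : Fin k₁ → ℝ) (f : (Fin k₁ → ℝ) → (Fin k₂ → ℝ)) : Prop :=
  ∀ (x : Fin k₁ → ℝ) (a : ℝ), 0 ≤ a → f (fun i => a ^ (l i) * x i) = a • f x

/-- The quasi-norm `‖x‖_l = max_i |x_i|^{1/l_i}` (as a supremum over `i`). -/
noncomputable def lQuasiNorm {k₁ : ℕ} (l : Fin k₁ → ℝ) (x : Fin k₁ → ℝ) : ℝ :=
  ⨆ i : Fin k₁, |x i| ^ (1 / l i)

lemma lQuasiNorm_homog {k₁ : ℕ} (l : Fin k₁ → ℝ) (hl : ∀ i, 0 < l i)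
    (x : Fin k₁ → ℝ) (a : ℝ) (ha : 0 ≤ a) :
    lQuasiNorm l (fun i => a ^ (l i) * x i) = a * lQuasiNorm l x := by
  unfold lQuasiNorm
  rw [Real.mul_iSup_of_nonneg ha]
  congr 1
  ext i
  rw [abs_mul, abs_of_nonneg (Real.rpow_nonneg ha _),
    Real.mul_rpow (Real.rpow_nonneg ha _) (abs_nonneg _),
    ← Real.rpow_mul ha, mul_one_div, div_self (hl i).ne', Real.rpow_one]

/-- If `f : ℝ^{k₁} → ℝ^{k₂}` is continuous, `l`-homogeneous (with all `l_i > 0`)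
and vanishes only at `0`, then there exists `c₂ > 0` with `‖x‖_l ≤ c₂ · ‖f(x)‖` for all `x`. -/
theorem stmt4 {k₁ k₂ : ℕ} (l : Fin k₁ → ℝ) (hl : ∀ i, 0 < l i)
    (f : (Fin k₁ → ℝ) → (Fin k₂ → ℝ)) (hf : Continuous f) (hhom : IsLHomogeneous l f)
    (hzero : ∀ x : Fin k₁ → ℝ, f x = 0 → x = 0) :
    ∃ c₂ : ℝ, 0 < c₂ ∧ ∀ x : Fin k₁ → ℝ, lQuasiNorm l x ≤ c₂ * ‖f x‖ := by
  rcases Nat.eq_zero_or_pos k₁ with hk | hk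
  · subst hk
    refine ⟨1, one_pos, fun x => ?_⟩
    have : lQuasiNorm l x = 0 := Real.iSup_of_isEmpty _
    rw [this, one_mul]
    exact norm_nonneg _
  haveI : Nonempty (Fin k₁) := Fin.pos_iff_nonempty.mp hk
  -- basic facts about the quasinorm
  have hQsup' : ∀ x : Fin k₁ → ℝ, lQuasiNorm l x
      = Finset.univ.sup' Finset.univ_nonempty (fun i => |x i| ^ (1 / l i)) := by
    intro x; rw [Finset.sup'_univ_eq_ciSup]; rfl
  have hQcont : Continuous (lQuasiNorm l) := by
    have : Continuous (fun x : Fin k₁ → ℝ =>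
        Finset.univ.sup' Finset.univ_nonempty (fun i => |x i| ^ (1 / l i))) := by
      apply Continuous.finset_sup'_apply
      intro i _
      exact ((continuous_apply i).abs).rpow_const
        (fun x => Or.inr (one_div_nonneg.mpr (hl i).le))
    simpa only [← hQsup'] using this
  have hQ0 : lQuasiNorm l (0 : Fin k₁ → ℝ) = 0 := by
    have h0 : ∀ i : Fin k₁, |(0 : Fin k₁ → ℝ) i| ^ (1 / l i) = 0 := fun i => by
      rw [Pi.zero_apply, abs_zero, Real.zero_rpow (one_div_ne_zero (hl i).ne')]
    unfold lQuasiNorm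
    simp only [h0]
    exact ciSup_const
  have hQpos : ∀ x : Fin k₁ → ℝ, x ≠ 0 → 0 < lQuasiNorm l x := by
    intro x hx
    obtain ⟨j, hj⟩ := Function.ne_iff.mp hx
    have hj' : (0:ℝ) < |x j| ^ (1 / l j) :=
      Real.rpow_pos_of_pos (abs_pos.mpr hj) _
    refine lt_of_lt_of_le hj' ?_
    rw [hQsup' x]
    exact Finset.le_sup' (fun i => |x i| ^ (1 / l i)) (Finset.mem_univ j)
  -- the unit sphere
  set S : Set (Fin k₁ → ℝ) := {y | lQuasiNorm l y = 1} with hS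
  have hSclosed : IsClosed S := isClosed_singleton.preimage hQcont
  have hSbdd : Bornology.IsBounded S := by
    rw [Metric.isBounded_iff_subset_closedBall 0]
    refine ⟨1, fun y hy => ?_⟩
    rw [Metric.mem_closedBall, dist_zero_right]
    rw [pi_norm_le_iff_of_nonneg zero_le_one]
    intro i
    have h1 : |y i| ^ (1 / l i) ≤ 1 := by
      have := Finset.le_sup' (fun i => |y i| ^ (1 / l i)) (Finset.mem_univ i)
      rw [← hQsup' y, hy] at this; exact this
    have heq : (|y i| ^ (1 / l i)) ^ (l i) = |y i| := by
      rw [← Real.rpow_mul (abs_nonneg _), one_div,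
        inv_mul_cancel₀ (hl i).ne', Real.rpow_one]
    rw [Real.norm_eq_abs, ← heq]
    exact Real.rpow_le_one (Real.rpow_nonneg (abs_nonneg _) _) h1 (hl i).le
  have hScompact : IsCompact S := Metric.isCompact_of_isClosed_isBounded hSclosed hSbdd
  have hSne : S.Nonempty := by
    classical
    obtain ⟨j⟩ := (inferInstance : Nonempty (Fin k₁))
    refine ⟨(Pi.single j 1 : Fin k₁ → ℝ), ?_⟩
    show lQuasiNorm l (Pi.single j 1 : Fin k₁ → ℝ) = 1
    rw [hQsup']
    apply le_antisymm
    · apply Finset.sup'_le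
      intro i _
      rcases eq_or_ne i j with rfl | hij
      · rw [Pi.single_eq_same, abs_one, Real.one_rpow]
      · rw [Pi.single_eq_of_ne hij, abs_zero,
          Real.zero_rpow (one_div_ne_zero (hl i).ne')]
        exact zero_le_one
    · have h := Finset.le_sup' (fun i => |(Pi.single j 1 : Fin k₁ → ℝ) i| ^ (1 / l i))
        (Finset.mem_univ j)
      simp only [Pi.single_eq_same, abs_one, Real.one_rpow] at h
      exact h
  -- minimum of ‖f‖ on S
  obtain ⟨y₀, hy₀S, hy₀min'⟩ := hScompact.exists_isMinOn hSne (hf.norm.continuousOn)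
  have hy₀min : ∀ y ∈ S, ‖f y₀‖ ≤ ‖f y‖ := fun y hy => hy₀min' hy
  have hy₀ne : f y₀ ≠ 0 := by
    intro h
    have : y₀ = 0 := hzero _ h
    rw [hS] at hy₀S
    simp only [Set.mem_setOf_eq, this, hQ0] at hy₀S
    exact one_ne_zero hy₀S.symm
  set m : ℝ := ‖f y₀‖ with hm
  have hmpos : 0 < m := norm_pos_iff.mpr hy₀ne
  refine ⟨m⁻¹, inv_pos.mpr hmpos, fun x => ?_⟩
  by_cases hx : x = 0
  · subst hx; rw [hQ0]; positivity
  · set q : ℝ := lQuasiNorm l x with hq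
    have hqpos : 0 < q := hQpos x hx
    set y : Fin k₁ → ℝ := fun i => (q⁻¹) ^ (l i) * x i with hy
    have hyS : y ∈ S := by
      show lQuasiNorm l y = 1
      rw [hy, lQuasiNorm_homog l hl x q⁻¹ (inv_nonneg.mpr hqpos.le), ← hq,
        inv_mul_cancel₀ hqpos.ne']
    have hxy : x = fun i => q ^ (l i) * y i := by
      funext i
      rw [hy, ← mul_assoc, ← Real.mul_rpow hqpos.le (inv_nonneg.mpr hqpos.le),
        mul_inv_cancel₀ hqpos.ne', Real.one_rpow, one_mul]
    have hfx : f x = q • f y := by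
      rw [hxy]; exact hhom y q hqpos.le
    have hnorm : ‖f x‖ = q * ‖f y‖ := by
      rw [hfx, norm_smul, Real.norm_eq_abs, abs_of_nonneg hqpos.le]
    have hmle : m ≤ ‖f y‖ := hy₀min y hyS
    rw [hnorm, ← mul_assoc]
    calc q = q * 1 := (mul_one q).symm
      _ ≤ q * (m⁻¹ * ‖f y‖) := by
          apply mul_le_mul_of_nonneg_left _ hqpos.le
          rw [← div_eq_inv_mul, le_div_iff₀ hmpos, one_mul]
          exact hmle
      _ = q * m⁻¹ * ‖f y‖ := by ring
      _ = m⁻¹ * q * ‖f y‖ := by ring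
end

section
/- Let Φ be a root system in a Euclidean space with inner product ⟨·,·⟩, Δ = {α₁,…,α_r} a simple system, and fix i ∈ {1,…,r}. Let γ_i be the sum of all roots λ ∈ Φ whose coefficient of α_i in the expansion over Δ is positive (i.e. λ ≥ α_i). Then there exists d_i > 0 such that ⟨γ_i, α_j⟩ = 0 for all j ≠ i and ⟨γ_i, α_i⟩ > 0; equivalently, γ_i is a positive multiple of the i-th fundamental weight. -/
open scoped RealInnerProductSpace BigOperators

/-- The reflection in the (nonzero) vector `l` of a real inner product space:
`ω_l (x) = x - (2⟨x,l⟩/⟨l,l⟩) l`. -/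
noncomputable def rsRefl {E : Type*} [NormedAddCommGroup E] [InnerProductSpace ℝ E]
    (l x : E) : E :=
  x - (2 * ⟪x, l⟫ / ⟪l, l⟫) • l

variable {E : Type*} [NormedAddCommGroup E] [InnerProductSpace ℝ E]

lemma rsRefl_invol (l : E) (hl : ⟪l, l⟫ ≠ 0) (x : E) :
    rsRefl l (rsRefl l x) = x := by
  unfold rsRefl
  rw [inner_sub_left, real_inner_smul_left]
  field_simp
  module

/-- Let `Φ` be a root system in a Euclidean space with simple system
`α₁, …, α_r` (every root decomposing uniquely as an integer combination of the simple
roots with all coefficients of the same sign).  For a fixed `i`, let `γᵢ` be the sum of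
all roots whose coefficient of `αᵢ` is positive.  Then `⟨γᵢ, α_j⟩ = 0` for `j ≠ i`
and `⟨γᵢ, αᵢ⟩ > 0`; equivalently `γᵢ` is a positive multiple of the `i`-th fundamental
weight. -/
theorem stmt5 {r : ℕ} (Φ : Finset E)
    (h0 : (0 : E) ∉ Φ)
    (hrefl : ∀ l ∈ Φ, ∀ μ ∈ Φ, rsRefl l μ ∈ Φ)
    (hint : ∀ l ∈ Φ, ∀ μ ∈ Φ, ∃ z : ℤ, 2 * ⟪μ, l⟫ / ⟪l, l⟫ = (z : ℝ))
    (α : Fin r → E) (hα : ∀ i, α i ∈ Φ) (hli : LinearIndependent ℝ α)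
    (m : E → Fin r → ℤ)
    (hexp : ∀ l ∈ Φ, l = ∑ j : Fin r, (m l j : ℝ) • α j)
    (hsign : ∀ l ∈ Φ, (∀ j, 0 ≤ m l j) ∨ (∀ j, m l j ≤ 0))
    (i : Fin r) :
    (∀ j : Fin r, j ≠ i → ⟪∑ l ∈ Φ.filter (fun l => 0 < m l i), l, α j⟫ = 0) ∧
      0 < ⟪∑ l ∈ Φ.filter (fun l => 0 < m l i), l, α i⟫ := by
  classical
  set S := Φ.filter (fun l => 0 < m l i) with hS
  set γ := ∑ l ∈ S, l with hγ
  have hα0 : ∀ j, α j ≠ 0 := fun j h => h0 (h ▸ hα j)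
  have hαin : ∀ j, ⟪α j, α j⟫ ≠ 0 := fun j => by
    exact (inner_self_ne_zero (𝕜 := ℝ)).mpr (hα0 j)
  -- uniqueness of coefficients
  have huniq : ∀ l ∈ Φ, ∀ c : Fin r → ℝ, l = ∑ k, c k • α k → ∀ k, c k = (m l k : ℝ) := by
    intro l hl c hc k
    have h2 : ∑ k, ((c k) - (m l k : ℝ)) • α k = 0 := by
      simp only [sub_smul, Finset.sum_sub_distrib]
      rw [← hc, ← hexp l hl, sub_self]
    have := (Fintype.linearIndependent_iff.mp hli) _ h2 k
    linarith [this]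
  -- coefficient i is preserved by reflection in α j, j ≠ i
  have hpres : ∀ j : Fin r, j ≠ i → ∀ l ∈ Φ, m (rsRefl (α j) l) i = m l i := by
    intro j hj l hl
    set c : ℝ := 2 * ⟪l, α j⟫ / ⟪α j, α j⟫ with hc
    have hmem : rsRefl (α j) l ∈ Φ := hrefl (α j) (hα j) l hl
    have hexp2 : rsRefl (α j) l = ∑ k, ((m l k : ℝ) - (if k = j then c else 0)) • α k := by
      unfold rsRefl
      simp only [sub_smul, Finset.sum_sub_distrib, ← hexp l hl, ite_smul, zero_smul]
      rw [Finset.sum_ite_eq' Finset.univ j (fun k => c • α k)]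
      simp [hc]
    have := huniq _ hmem _ hexp2 i
    rw [if_neg (fun h : i = j => hj h.symm)] at this
    have h4 : ((m (rsRefl (α j) l) i : ℝ)) = (m l i : ℝ) := by linarith
    exact_mod_cast h4
  -- reflection in α j (j ≠ i) permutes S
  have hmap : ∀ j : Fin r, j ≠ i → ∀ l ∈ S, rsRefl (α j) l ∈ S := by
    intro j hj l hl
    rw [hS, Finset.mem_filter] at hl ⊢
    exact ⟨hrefl (α j) (hα j) l hl.1, by rw [hpres j hj l hl.1]; exact hl.2⟩
  -- hence the sum γ is fixed: sum of reflections equals γ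
  have hsumfix : ∀ j : Fin r, j ≠ i → ∑ l ∈ S, rsRefl (α j) l = γ := by
    intro j hj
    rw [hγ]
    apply Finset.sum_nbij' (fun l => rsRefl (α j) l) (fun l => rsRefl (α j) l)
    · exact fun l hl => hmap j hj l hl
    · exact fun l hl => hmap j hj l hl
    · intro l hl
      exact rsRefl_invol (α j) (hαin j) l
    · intro l hl
      exact rsRefl_invol (α j) (hαin j) l
    · intro l hl; rfl
  -- rsRefl is "linear" over the sum
  have hlin : ∀ j : Fin r, ∑ l ∈ S, rsRefl (α j) l
      = γ - (2 * ⟪γ, α j⟫ / ⟪α j, α j⟫) • α j := by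
    intro j
    unfold rsRefl
    rw [Finset.sum_sub_distrib, ← hγ, ← Finset.sum_smul, ← Finset.sum_div,
      ← Finset.mul_sum, ← sum_inner, ← hγ]
  -- orthogonality
  have horth : ∀ j : Fin r, j ≠ i → ⟪γ, α j⟫ = 0 := by
    intro j hj
    have h1 := hsumfix j hj
    rw [hlin j] at h1
    have h2 : (2 * ⟪γ, α j⟫ / ⟪α j, α j⟫) • α j = 0 := by
      have := sub_eq_self.mp h1
      exact this
    rcases smul_eq_zero.mp h2 with h3 | h3
    · rcases div_eq_zero_iff.mp h3 with h4 | h4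
      · linarith
      · exact absurd h4 (hαin j)
    · exact absurd h3 (hα0 j)
  refine ⟨horth, ?_⟩
  -- α i ∈ S
  have hmi : m (α i) i = 1 := by
    have h1 : α i = ∑ k, (if k = i then (1:ℝ) else 0) • α k := by
      simp [ite_smul]
    have := huniq _ (hα i) _ h1 i
    rw [if_pos rfl] at this
    exact_mod_cast this.symm
  have hαiS : α i ∈ S := by
    rw [hS, Finset.mem_filter]
    exact ⟨hα i, by rw [hmi]; norm_num⟩
  -- coefficients of γ
  set c : Fin r → ℝ := fun k => ∑ l ∈ S, (m l k : ℝ) with hcdef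
  have hγexp : γ = ∑ k, c k • α k := by
    rw [hγ]
    rw [Finset.sum_congr rfl (fun l hl => hexp l (Finset.mem_filter.mp hl).1)]
    rw [Finset.sum_comm]
    simp [hcdef, Finset.sum_smul]
    rfl
  have hci : 0 < c i := by
    rw [hcdef]
    apply Finset.sum_pos
    · intro l hl
      exact_mod_cast (Finset.mem_filter.mp hl).2
    · exact ⟨α i, hαiS⟩
  have hγne : γ ≠ 0 := by
    intro h
    have h2 : ∑ k, c k • α k = 0 := by rw [← hγexp, h]
    have := (Fintype.linearIndependent_iff.mp hli) _ h2 i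
    rw [this] at hci
    exact lt_irrefl _ hci
  have hγγ : 0 < ⟪γ, γ⟫ := by
    rw [real_inner_self_eq_norm_sq]
    exact pow_pos (norm_pos_iff.mpr hγne) 2
  have hkey : ⟪γ, γ⟫ = c i * ⟪γ, α i⟫ := by
    have h1 : ⟪γ, γ⟫ = ∑ k, c k * ⟪γ, α k⟫ := by
      nth_rewrite 2 [hγexp]
      rw [inner_sum]
      simp [real_inner_smul_right]
    rw [h1, Finset.sum_eq_single i
      (fun k _ hk => by rw [horth k hk, mul_zero])
      (fun h => absurd (Finset.mem_univ i) h)]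
  nlinarith [hγγ, hci, hkey]
end

section
/- Let Φ be a root system with simple system Δ and fix α ∈ Δ. Set m_α = max_{λ∈Φ} m_α(λ), Φ_α = {λ ∈ Φ : m_α(λ) = m_α}, and χ_α = Σ_{μ∈Φ_α} μ. If λ ∈ Φ satisfies ⟨χ_α, λ⟩ > 0, then for every μ ∈ Φ_α, μ + λ is not a root. -/
open scoped RealInnerProductSpace BigOperators

variable {E : Type*} [NormedAddCommGroup E] [InnerProductSpace ℝ E]

/-- With `Φ`, `Δ`, `α = αᵢ`, `m_α`, `Φ_α` and `χ_α = Σ_{μ ∈ Φ_α} μ` as in the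
non-reduced-case setup: if a root `λ` satisfies `⟨χ_α, λ⟩ > 0`, then `μ + λ` is not a root
for any `μ ∈ Φ_α`. -/
theorem stmt7 {r : ℕ} (Φ : Finset E)
    (h0 : (0 : E) ∉ Φ)
    (hrefl : ∀ l ∈ Φ, ∀ μ ∈ Φ, rsRefl l μ ∈ Φ)
    (hint : ∀ l ∈ Φ, ∀ μ ∈ Φ, ∃ z : ℤ, 2 * ⟪μ, l⟫ / ⟪l, l⟫ = (z : ℝ))
    (α : Fin r → E) (hα : ∀ i, α i ∈ Φ) (hli : LinearIndependent ℝ α)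
    (m : E → Fin r → ℤ)
    (hexp : ∀ l ∈ Φ, l = ∑ j : Fin r, (m l j : ℝ) • α j)
    (hsign : ∀ l ∈ Φ, (∀ j, 0 ≤ m l j) ∨ (∀ j, m l j ≤ 0))
    (i : Fin r) (lam : E) (hlam : lam ∈ Φ)
    (hpos : 0 < ⟪∑ l ∈ Φ.filter (fun l => m l i = Φ.sup' ⟨α i, hα i⟩ (fun l => m l i)), l, lam⟫) :
    ∀ μ ∈ Φ.filter (fun l => m l i = Φ.sup' ⟨α i, hα i⟩ (fun l => m l i)), μ + lam ∉ Φ := by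
  classical
  intro μ hμ hcontra
  set M := Φ.sup' ⟨α i, hα i⟩ (fun l => m l i) with hMdef
  set S := Φ.filter (fun l => m l i = M) with hSdef
  obtain ⟨hμΦ, hμM⟩ := Finset.mem_filter.mp hμ
  have hlam0 : lam ≠ 0 := fun h => h0 (h ▸ hlam)
  have hll : (0:ℝ) < ⟪lam, lam⟫ :=
    lt_of_le_of_ne real_inner_self_nonneg
      (fun h => hlam0 (inner_self_eq_zero.mp h.symm))
  have hllne : ⟪lam, lam⟫ ≠ 0 := ne_of_gt hll
  -- uniqueness of coefficients
  have huniq : ∀ c d : Fin r → ℝ, (∑ j, c j • α j) = (∑ j, d j • α j) → ∀ j, c j = d j := by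
    intro c d h j
    have h2 : ∑ jj, (c - d) jj • α jj = 0 := by
      simp only [Pi.sub_apply, sub_smul, Finset.sum_sub_distrib, h, sub_self]
    have := Fintype.linearIndependent_iff.mp hli (c - d) h2 j
    simpa [sub_eq_zero] using this
  have hMle : ∀ l ∈ Φ, m l i ≤ M := fun l hl => Finset.le_sup' (fun l => m l i) hl
  have hz : ∀ ν ∈ Φ, ∃ zz : ℤ, 2 * ⟪ν, lam⟫ / ⟪lam, lam⟫ = (zz : ℝ) :=
    fun ν hν => hint lam hlam ν hν
  choose! z hzspec using hz
  have hinner : ∀ ν ∈ Φ, ⟪ν, lam⟫ = (z ν : ℝ) * ⟪lam, lam⟫ / 2 := by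
    intro ν hν
    have h := hzspec ν hν
    field_simp at h ⊢
    linarith
  have comb : ∀ (a b : Fin r → ℝ) (c : ℝ),
      (∑ j, a j • α j) - c • (∑ j, b j • α j) = ∑ j, (a j - c * b j) • α j := by
    intro a b c
    rw [Finset.smul_sum, ← Finset.sum_sub_distrib]
    refine Finset.sum_congr rfl fun j _ => ?_
    rw [sub_smul, smul_smul]
  -- coefficients of reflections
  have hreflm : ∀ ν ∈ Φ, ∀ j, m (rsRefl lam ν) j = m ν j - z ν * m lam j := by
    intro ν hν j
    have hσ : rsRefl lam ν ∈ Φ := hrefl lam hlam ν hν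
    have e1 : rsRefl lam ν = ∑ jj, ((m (rsRefl lam ν) jj : ℝ)) • α jj := hexp _ hσ
    have e2 : rsRefl lam ν = ∑ jj, ((m ν jj : ℝ) - (z ν : ℝ) * (m lam jj : ℝ)) • α jj := by
      calc rsRefl lam ν = ν - (z ν : ℝ) • lam := by rw [rsRefl, hzspec ν hν]
        _ = (∑ jj, (m ν jj : ℝ) • α jj) - (z ν : ℝ) • (∑ jj, (m lam jj : ℝ) • α jj) := by
            rw [← hexp ν hν, ← hexp lam hlam]
        _ = _ := comb _ _ _
    have := huniq _ _ (e1.symm.trans e2) j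
    exact_mod_cast this
  -- coefficient of the sum μ + lam
  have hadd : ∀ j, m (μ + lam) j = m μ j + m lam j := by
    intro j
    have e1 : μ + lam = ∑ jj, ((m (μ + lam) jj : ℝ)) • α jj := hexp _ hcontra
    have e2 : μ + lam = ∑ jj, ((m μ jj : ℝ) + (m lam jj : ℝ)) • α jj := by
      calc μ + lam = (∑ jj, (m μ jj : ℝ) • α jj) + (∑ jj, (m lam jj : ℝ) • α jj) := by
            rw [← hexp μ hμΦ, ← hexp lam hlam]
        _ = _ := by
            rw [← Finset.sum_add_distrib]
            exact Finset.sum_congr rfl fun jj _ => (add_smul _ _ _).symm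
    have := huniq _ _ (e1.symm.trans e2) j
    exact_mod_cast this
  have hmlam_le : m lam i ≤ 0 := by
    have h1 := hMle (μ + lam) hcontra
    rw [hadd i] at h1
    omega
  -- maximality applied to reflections within S
  have hkey : ∀ ν ∈ S, 0 ≤ z ν * m lam i := by
    intro ν hν
    obtain ⟨hνΦ, hνM⟩ := Finset.mem_filter.mp hν
    have h1 := hMle (rsRefl lam ν) (hrefl lam hlam ν hνΦ)
    rw [hreflm ν hνΦ i, hνM] at h1
    omega
  -- rewrite hpos
  rw [sum_inner] at hpos
  rcases lt_or_eq_of_le hmlam_le with hlt | heq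
  · -- each z ν ≤ 0, so inner sum ≤ 0
    have hterm : ∀ ν ∈ S, ⟪ν, lam⟫ ≤ 0 := by
      intro ν hν
      obtain ⟨hνΦ, _⟩ := Finset.mem_filter.mp hν
      have hzle : z ν ≤ 0 := by nlinarith [hkey ν hν]
      rw [hinner ν hνΦ]
      have : (z ν : ℝ) ≤ 0 := by exact_mod_cast hzle
      nlinarith
    have := Finset.sum_nonpos hterm
    linarith
  · -- m lam i = 0 : reflection permutes S, sum of z is 0
    have hm0 : m lam i = 0 := heq
    have hmap : ∀ ν ∈ S, rsRefl lam ν ∈ S := by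
      intro ν hν
      obtain ⟨hνΦ, hνM⟩ := Finset.mem_filter.mp hν
      refine Finset.mem_filter.mpr ⟨hrefl lam hlam ν hνΦ, ?_⟩
      rw [hreflm ν hνΦ i, hm0, mul_zero, sub_zero, hνM]
    have hinv : ∀ x : E, rsRefl lam (rsRefl lam x) = x := by
      intro x
      simp only [rsRefl, inner_sub_left, real_inner_smul_left]
      rw [sub_sub, ← add_smul]
      have hc : 2 * ⟪x, lam⟫ / ⟪lam, lam⟫ +
          2 * (⟪x, lam⟫ - 2 * ⟪x, lam⟫ / ⟪lam, lam⟫ * ⟪lam, lam⟫) / ⟪lam, lam⟫ = 0 := by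
        field_simp
        ring
      rw [hc, zero_smul, sub_zero]
    have hsumeq : ∑ ν ∈ S, rsRefl lam ν = ∑ ν ∈ S, ν := by
      refine Finset.sum_nbij' (fun ν => rsRefl lam ν) (fun ν => rsRefl lam ν)
        hmap hmap (fun ν _ => hinv ν) (fun ν _ => hinv ν) (fun ν _ => rfl)
    have hsum2 : ∑ ν ∈ S, rsRefl lam ν = (∑ ν ∈ S, ν) - (∑ ν ∈ S, (z ν : ℝ)) • lam := by
      rw [Finset.sum_smul, ← Finset.sum_sub_distrib]
      refine Finset.sum_congr rfl fun ν hν => ?_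
      obtain ⟨hνΦ, _⟩ := Finset.mem_filter.mp hν
      rw [rsRefl, hzspec ν hνΦ]
    have hzero : (∑ ν ∈ S, (z ν : ℝ)) • lam = 0 := by
      have h := hsumeq.symm.trans hsum2
      rw [eq_sub_iff_add_eq, add_eq_left] at h
      exact h
    have hzsum : (∑ ν ∈ S, (z ν : ℝ)) = 0 := by
      rcases smul_eq_zero.mp hzero with h | h
      · exact h
      · exact absurd h hlam0
    have : ∑ ν ∈ S, ⟪ν, lam⟫ = 0 := by
      calc ∑ ν ∈ S, ⟪ν, lam⟫ = ∑ ν ∈ S, (z ν : ℝ) * ⟪lam, lam⟫ / 2 :=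
            Finset.sum_congr rfl fun ν hν => hinner ν (Finset.mem_filter.mp hν).1
        _ = (∑ ν ∈ S, (z ν : ℝ)) * ⟪lam, lam⟫ / 2 := by
            rw [← Finset.sum_div, ← Finset.sum_mul]
        _ = 0 := by rw [hzsum, zero_mul, zero_div]
    linarith
end

section
/- Let Φ be an irreducible root system of rank 2 in a Euclidean plane with simple system {α₁, α₂} and fundamental weight χ₁ (satisfying ⟨χ₁,α₂⟩ = 0 and ⟨χ₁,α₁⟩ > 0). Then for every element ω of the Weyl group W(Φ) there exist real numbers a, b, not both positive, such that ω(χ₁) = a·χ₁ + b·ω_{α₁}(χ₁), where ω_{α₁} is the reflection in α₁. -/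
open scoped RealInnerProductSpace BigOperators

variable {E : Type*} [NormedAddCommGroup E] [InnerProductSpace ℝ E]

lemma rsRefl_add (l x y : E) : rsRefl l (x + y) = rsRefl l x + rsRefl l y := by
  simp only [rsRefl, inner_add_left]
  have h : 2 * (⟪x, l⟫ + ⟪y, l⟫) / ⟪l, l⟫ = 2 * ⟪x, l⟫ / ⟪l, l⟫ + 2 * ⟪y, l⟫ / ⟪l, l⟫ := by
    ring
  rw [h, add_smul]; abel

lemma rsRefl_smul (l : E) (c : ℝ) (x : E) : rsRefl l (c • x) = c • rsRefl l x := by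
  simp only [rsRefl, real_inner_smul_left]
  rw [smul_sub, smul_smul]
  congr 1
  congr 1
  ring

lemma rsRefl_sub (l x y : E) : rsRefl l (x - y) = rsRefl l x - rsRefl l y := by
  have := rsRefl_add l (x - y) y
  simp only [sub_add_cancel] at this
  rw [this]; abel

lemma rsRefl_inner (l : E) (hl : ⟪l, l⟫ ≠ 0) (x y : E) :
    ⟪rsRefl l x, rsRefl l y⟫ = ⟪x, y⟫ := by
  simp only [rsRefl, inner_sub_left, inner_sub_right, real_inner_smul_left,
    real_inner_smul_right]
  rw [real_inner_comm l y, real_inner_comm l x]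
  field_simp
  ring

lemma rsRefl_neg (l x : E) : rsRefl (-l) x = rsRefl l x := by
  simp only [rsRefl, inner_neg_neg, inner_neg_right, smul_neg, neg_smul, inner_neg_left]
  rw [mul_neg, neg_div, neg_smul, neg_neg, neg_neg]

lemma rsRefl_scale (l : E) (c : ℝ) (hc : c ≠ 0) (x : E) : rsRefl (c • l) x = rsRefl l x := by
  by_cases hl : ⟪l, l⟫ = (0:ℝ)
  · have : l = 0 := inner_self_eq_zero.mp hl
    simp [this, rsRefl]
  · simp only [rsRefl, real_inner_smul_right, real_inner_smul_left, smul_smul]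
    congr 2
    field_simp

lemma rsRefl_conj (l v : E) (hl : ⟪l, l⟫ ≠ 0) (x : E) :
    rsRefl (rsRefl l v) x = rsRefl l (rsRefl v (rsRefl l x)) := by
  have h1 : ⟪rsRefl l v, rsRefl l v⟫ = ⟪v, v⟫ := rsRefl_inner l hl v v
  have h2 : ⟪rsRefl l x, v⟫ = ⟪x, rsRefl l v⟫ := by
    have h := rsRefl_inner l hl (rsRefl l x) v
    rw [rsRefl_invol l hl x] at h
    exact h.symm
  conv_rhs => rw [show rsRefl v (rsRefl l x) = rsRefl l x - (2 * ⟪rsRefl l x, v⟫ / ⟪v, v⟫) • v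
    from rfl]
  rw [rsRefl_sub, rsRefl_smul, rsRefl_invol l hl x, h2]
  conv_lhs => rw [rsRefl]
  rw [h1]
set_option maxHeartbeats 1000000 in
/-- Let `Φ` be an irreducible rank-2 root system in a Euclidean plane with
simple system `{α₁, α₂}` and fundamental weight `χ₁` (so `⟪χ₁, α₂⟫ = 0`, `⟪χ₁, α₁⟫ > 0`).
Then for every element `ω` of the Weyl group (the monoid generated by the reflections in
the roots) there exist `a, b`, not both positive, with
`ω(χ₁) = a • χ₁ + b • ω_{α₁}(χ₁)`. -/
theorem stmt8 [FiniteDimensional ℝ E] (hdim : Module.finrank ℝ E = 2)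
    (Φ : Finset E)
    (h0 : (0 : E) ∉ Φ)
    (hrefl : ∀ l ∈ Φ, ∀ μ ∈ Φ, rsRefl l μ ∈ Φ)
    (hint : ∀ l ∈ Φ, ∀ μ ∈ Φ, ∃ z : ℤ, 2 * ⟪μ, l⟫ / ⟪l, l⟫ = (z : ℝ))
    (hirr : ¬ ∃ Φ₁ Φ₂ : Set E, Φ₁.Nonempty ∧ Φ₂.Nonempty ∧ Φ₁ ∪ Φ₂ = ↑Φ ∧
      ∀ x ∈ Φ₁, ∀ y ∈ Φ₂, ⟪x, y⟫ = 0)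
    (α : Fin 2 → E) (hα : ∀ i, α i ∈ Φ) (hli : LinearIndependent ℝ α)
    (m : E → Fin 2 → ℤ)
    (hexp : ∀ l ∈ Φ, l = ∑ j : Fin 2, (m l j : ℝ) • α j)
    (hsign : ∀ l ∈ Φ, (∀ j, 0 ≤ m l j) ∨ (∀ j, m l j ≤ 0))
    (χ₁ : E) (hχ₁ : ⟪χ₁, α 1⟫ = 0) (hχ₁' : 0 < ⟪χ₁, α 0⟫)
    (w : Function.End E)
    (hw : w ∈ Submonoid.closure {f : Function.End E | ∃ l ∈ Φ, f = rsRefl l}) :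
    ∃ a b : ℝ, ¬ (0 < a ∧ 0 < b) ∧ w χ₁ = a • χ₁ + b • rsRefl (α 0) χ₁ := by
  classical
  -- basic facts
  have hne : ∀ i, α i ≠ 0 := fun i h => h0 (h ▸ hα i)
  have hN : ∀ i, (0:ℝ) < ⟪α i, α i⟫ := fun i =>
    lt_of_le_of_ne real_inner_self_nonneg (fun h => hne i (inner_self_eq_zero.mp h.symm))
  -- linear independence: zero combination
  have hzero : ∀ c0 c1 : ℝ, c0 • α 0 + c1 • α 1 = 0 → c0 = 0 ∧ c1 = 0 := by
    intro c0 c1 h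
    have h2 := Fintype.linearIndependent_iff.mp hli ![c0, c1]
      (by rw [Fin.sum_univ_two]; simpa using h)
    exact ⟨by simpa using h2 0, by simpa using h2 1⟩
  -- coefficient identification
  have hcoeff : ∀ l ∈ Φ, ∀ c0 c1 : ℝ, l = c0 • α 0 + c1 • α 1 →
      (m l 0 : ℝ) = c0 ∧ (m l 1 : ℝ) = c1 := by
    intro l hl c0 c1 h
    have e1 := hexp l hl
    rw [Fin.sum_univ_two] at e1
    have hz : ((m l 0 : ℝ) - c0) • α 0 + ((m l 1 : ℝ) - c1) • α 1 = 0 := by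
      have : ((m l 0 : ℝ) - c0) • α 0 + ((m l 1 : ℝ) - c1) • α 1
          = ((m l 0 : ℝ) • α 0 + (m l 1 : ℝ) • α 1) - (c0 • α 0 + c1 • α 1) := by
        module
      rw [this, ← e1, ← h, sub_self]
    obtain ⟨hz0, hz1⟩ := hzero _ _ hz
    constructor <;> linarith
  -- perpendicular to both basis vectors implies zero
  have hperp : ∀ z : E, ⟪z, α 0⟫ = 0 → ⟪z, α 1⟫ = 0 → z = 0 := by
    intro z hz0 hz1
    have hcard : Fintype.card (Fin 2) = Module.finrank ℝ E := by simp [hdim]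
    let B := basisOfLinearIndependentOfCardEqFinrank hli hcard
    have hB : ∀ i, B i = α i := by
      intro i; rw [coe_basisOfLinearIndependentOfCardEqFinrank]
    have hrepr : z = B.repr z 0 • α 0 + B.repr z 1 • α 1 := by
      have := B.sum_repr z
      rw [Fin.sum_univ_two, hB 0, hB 1] at this
      exact this.symm
    have hzz : ⟪z, z⟫ = 0 := by
      nth_rewrite 2 [hrepr]
      rw [inner_add_right, real_inner_smul_right, real_inner_smul_right, hz0, hz1]
      ring
    exact inner_self_eq_zero.mp hzz
  -- the Cartan-like constants
  set s : ℝ := 2 * ⟪α 0, α 1⟫ / ⟪α 1, α 1⟫ with hs_def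
  set t : ℝ := 2 * ⟪α 1, α 0⟫ / ⟪α 0, α 0⟫ with ht_def
  set c : ℝ := 2 * ⟪χ₁, α 0⟫ / ⟪α 0, α 0⟫ with hc_def
  have hc_pos : 0 < c := div_pos (by linarith) (hN 0)
  have ha01 : ⟪α 0, α 1⟫ = s * ⟪α 1, α 1⟫ / 2 := by
    rw [hs_def]; field_simp [(hN 1).ne']
    exact (mul_div_cancel_right₀ _ (hN 1).ne').symm
  have ha10 : ⟪α 1, α 0⟫ = t * ⟪α 0, α 0⟫ / 2 := by
    rw [ht_def]; field_simp [(hN 0).ne']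
    exact (mul_div_cancel_right₀ _ (hN 0).ne').symm
  have hxa0 : ⟪χ₁, α 0⟫ = c * ⟪α 0, α 0⟫ / 2 := by
    rw [hc_def]; field_simp [(hN 0).ne']
    exact (div_self (hN 0).ne').symm
  obtain ⟨zs, hzs⟩ := hint (α 1) (hα 1) (α 0) (hα 0)
  obtain ⟨zt, hzt⟩ := hint (α 0) (hα 0) (α 1) (hα 1)
  rw [← hs_def] at hzs
  rw [← ht_def] at hzt
  -- s ≤ 0
  have hs_le : s ≤ 0 := by
    have hl' : rsRefl (α 1) (α 0) ∈ Φ := hrefl _ (hα 1) _ (hα 0)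
    have he : rsRefl (α 1) (α 0) = (1:ℝ) • α 0 + (-s) • α 1 := by
      show α 0 - (2 * ⟪α 0, α 1⟫ / ⟪α 1, α 1⟫) • α 1 = _
      rw [← hs_def]; module
    obtain ⟨h1, h2⟩ := hcoeff _ hl' 1 (-s) he
    rcases hsign _ hl' with hp | hn
    · have := hp 1
      have : (0:ℝ) ≤ (m (rsRefl (α 1) (α 0)) 1 : ℝ) := by exact_mod_cast this
      rw [h2] at this; linarith
    · have := hn 0
      have : (m (rsRefl (α 1) (α 0)) 0 : ℝ) ≤ 0 := by exact_mod_cast this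
      rw [h1] at this; linarith
  have ht_le : t ≤ 0 := by
    have hl' : rsRefl (α 0) (α 1) ∈ Φ := hrefl _ (hα 0) _ (hα 1)
    have he : rsRefl (α 0) (α 1) = (-t) • α 0 + (1:ℝ) • α 1 := by
      show α 1 - (2 * ⟪α 1, α 0⟫ / ⟪α 0, α 0⟫) • α 0 = _
      rw [← ht_def]; module
    obtain ⟨h1, h2⟩ := hcoeff _ hl' (-t) 1 he
    rcases hsign _ hl' with hp | hn
    · have := hp 0
      have : (0:ℝ) ≤ (m (rsRefl (α 0) (α 1)) 0 : ℝ) := by exact_mod_cast this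
      rw [h1] at this; linarith
    · have := hn 1
      have : (m (rsRefl (α 0) (α 1)) 1 : ℝ) ≤ 0 := by exact_mod_cast this
      rw [h2] at this; linarith
  -- irreducibility: the simple roots are not orthogonal
  have h12 : ⟪α 0, α 1⟫ ≠ 0 := by
    intro hperp01
    have hperp10 : ⟪α 1, α 0⟫ = 0 := by rw [real_inner_comm]; exact hperp01
    -- every root is a multiple of a simple root
    have hOr : ∀ l ∈ Φ, m l 0 = 0 ∨ m l 1 = 0 := by
      intro l hl
      by_contra hcon
      push_neg at hcon
      obtain ⟨hp, hq⟩ := hcon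
      have hinner0 : ⟪l, α 0⟫ = (m l 0 : ℝ) * ⟪α 0, α 0⟫ := by
        nth_rewrite 1 [hexp l hl]
        rw [Fin.sum_univ_two, inner_add_left, real_inner_smul_left, real_inner_smul_left,
          hperp10]
        ring
      have hl' : rsRefl (α 0) l ∈ Φ := hrefl _ (hα 0) l hl
      have hl'eq : rsRefl (α 0) l = (-(m l 0 : ℝ)) • α 0 + (m l 1 : ℝ) • α 1 := by
        show l - (2 * ⟪l, α 0⟫ / ⟪α 0, α 0⟫) • α 0 = _
        have hco : 2 * ⟪l, α 0⟫ / ⟪α 0, α 0⟫ = 2 * (m l 0 : ℝ) := by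
          rw [hinner0]; field_simp [(hN 0).ne']; ring_nf; rw [mul_inv_cancel₀ (hN 0).ne']
        rw [hco]
        nth_rewrite 1 [hexp l hl]
        rw [Fin.sum_univ_two]
        module
      obtain ⟨hc0, hc1⟩ := hcoeff _ hl' _ _ hl'eq
      have hh0 : m (rsRefl (α 0) l) 0 = -(m l 0) := by exact_mod_cast hc0
      have hh1 : m (rsRefl (α 0) l) 1 = m l 1 := by exact_mod_cast hc1
      rcases hsign l hl with h | h <;> rcases hsign _ hl' with h' | h' <;>
        [skip; skip; skip; skip] <;>
        first
        | (have a1 := h 0; have a2 := h 1; have b1 := h' 0; have b2 := h' 1; omega)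
    apply hirr
    refine ⟨{y | y ∈ Φ ∧ ⟪y, α 1⟫ = 0}, {y | y ∈ Φ ∧ ⟪y, α 0⟫ = 0},
      ⟨α 0, hα 0, hperp01⟩, ⟨α 1, hα 1, hperp10⟩, ?_, ?_⟩
    · ext y
      simp only [Set.mem_union, Set.mem_setOf_eq, Finset.coe_sort_coe, Finset.mem_coe]
      constructor
      · rintro (⟨h, _⟩ | ⟨h, _⟩) <;> exact h
      · intro hy
        have hy1 : ⟪y, α 1⟫ = (m y 0 : ℝ) * ⟪α 0, α 1⟫ + (m y 1 : ℝ) * ⟪α 1, α 1⟫ := by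
          nth_rewrite 1 [hexp y hy]
          rw [Fin.sum_univ_two, inner_add_left, real_inner_smul_left, real_inner_smul_left]
        have hy0 : ⟪y, α 0⟫ = (m y 0 : ℝ) * ⟪α 0, α 0⟫ + (m y 1 : ℝ) * ⟪α 1, α 0⟫ := by
          nth_rewrite 1 [hexp y hy]
          rw [Fin.sum_univ_two, inner_add_left, real_inner_smul_left, real_inner_smul_left]
        rcases hOr y hy with h | h
        · right
          refine ⟨hy, ?_⟩
          rw [hy0, hperp10, h]
          push_cast
          ring
        · left
          refine ⟨hy, ?_⟩
          rw [hy1, hperp01, h]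
          push_cast
          ring
    · rintro x ⟨hxΦ, hx⟩ y ⟨hyΦ, hy⟩
      have hx1 : (m x 1 : ℝ) = 0 := by
        have hy1 : ⟪x, α 1⟫ = (m x 0 : ℝ) * ⟪α 0, α 1⟫ + (m x 1 : ℝ) * ⟪α 1, α 1⟫ := by
          nth_rewrite 1 [hexp x hxΦ]
          rw [Fin.sum_univ_two, inner_add_left, real_inner_smul_left, real_inner_smul_left]
        rw [hx, hperp01] at hy1
        have := (hN 1).ne'
        have : (m x 1 : ℝ) * ⟪α 1, α 1⟫ = 0 := by linarith
        rcases mul_eq_zero.mp this with h | h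
        · exact h
        · exact absurd h (hN 1).ne'
      have hy0 : (m y 0 : ℝ) = 0 := by
        have hh : ⟪y, α 0⟫ = (m y 0 : ℝ) * ⟪α 0, α 0⟫ + (m y 1 : ℝ) * ⟪α 1, α 0⟫ := by
          nth_rewrite 1 [hexp y hyΦ]
          rw [Fin.sum_univ_two, inner_add_left, real_inner_smul_left, real_inner_smul_left]
        rw [hy, hperp10] at hh
        have : (m y 0 : ℝ) * ⟪α 0, α 0⟫ = 0 := by linarith
        rcases mul_eq_zero.mp this with h | h
        · exact h
        · exact absurd h (hN 0).ne'
      rw [hexp x hxΦ, hexp y hyΦ]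
      simp only [Fin.sum_univ_two]
      simp only [inner_add_left, inner_add_right, real_inner_smul_left, real_inner_smul_right,
        hx1, hy0, hperp01, hperp10]
      ring
  -- strict Cauchy-Schwarz
  have hCS : ⟪α 0, α 1⟫ * ⟪α 0, α 1⟫ < ⟪α 0, α 0⟫ * ⟪α 1, α 1⟫ := by
    set z : E := ⟪α 1, α 1⟫ • α 0 - ⟪α 0, α 1⟫ • α 1 with hzdef
    have hzne : z ≠ 0 := by
      intro h
      have : ⟪α 1, α 1⟫ • α 0 + (-⟪α 0, α 1⟫) • α 1 = 0 := by
        rw [hzdef] at h; rw [← h]; module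
      exact (hN 1).ne' (hzero _ _ this).1
    have hzz : 0 < ⟪z, z⟫ :=
      lt_of_le_of_ne real_inner_self_nonneg (fun h => hzne (inner_self_eq_zero.mp h.symm))
    have hexpand : ⟪z, z⟫ = ⟪α 1, α 1⟫ * (⟪α 0, α 0⟫ * ⟪α 1, α 1⟫ - ⟪α 0, α 1⟫ * ⟪α 0, α 1⟫) := by
      rw [hzdef]
      rw [inner_sub_left, inner_sub_right, inner_sub_right, real_inner_smul_left,
        real_inner_smul_left, real_inner_smul_left, real_inner_smul_left,
        real_inner_smul_right, real_inner_smul_right, real_inner_smul_right,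
        real_inner_smul_right, real_inner_comm (α 1) (α 0)]
      ring
    rw [hexpand] at hzz
    nlinarith [hN 0, hN 1]
  -- the possible Cartan products
  have hst_eq : s * t = ((zs * zt : ℤ) : ℝ) := by
    rw [hzs, hzt]; push_cast; ring
  have hs_ne : s ≠ 0 := by
    rw [hs_def]
    exact div_ne_zero (by simpa using h12) (hN 1).ne'
  have ht_ne : t ≠ 0 := by
    rw [ht_def]
    refine div_ne_zero ?_ (hN 0).ne'
    simp only [mul_ne_zero_iff]
    exact ⟨two_ne_zero, by rw [real_inner_comm]; exact h12⟩
  have hzs_neg : zs < 0 := by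
    rcases lt_trichotomy zs 0 with h | h | h
    · exact h
    · exact absurd (by rw [h] at hzs; simpa using hzs) hs_ne
    · exfalso
      have : (0:ℝ) < zs := by exact_mod_cast h
      rw [← hzs] at this
      linarith
  have hzt_neg : zt < 0 := by
    rcases lt_trichotomy zt 0 with h | h | h
    · exact h
    · exact absurd (by rw [h] at hzt; simpa using hzt) ht_ne
    · exfalso
      have : (0:ℝ) < zt := by exact_mod_cast h
      rw [← hzt] at this
      linarith
  have hst_lt : s * t < 4 := by
    have hst4 : s * t = 4 * (⟪α 0, α 1⟫ * ⟪α 0, α 1⟫) / (⟪α 0, α 0⟫ * ⟪α 1, α 1⟫) := by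
      rw [hs_def, ht_def, real_inner_comm (α 1) (α 0)]
      field_simp
      ring
    rw [hst4, div_lt_iff₀ (mul_pos (hN 0) (hN 1))]
    nlinarith [hCS]
  have hST13 : s * t = 1 ∨ s * t = 2 ∨ s * t = 3 := by
    have h1 : 0 < zs * zt := mul_pos_of_neg_of_neg hzs_neg hzt_neg
    have h2 : zs * zt < 4 := by
      by_contra h
      push_neg at h
      have : (4:ℝ) ≤ ((zs * zt : ℤ) : ℝ) := by exact_mod_cast h
      rw [← hst_eq] at this
      linarith
    have : zs * zt = 1 ∨ zs * zt = 2 ∨ zs * zt = 3 := by omega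
    rcases this with h | h | h
    · left; rw [hst_eq, h]; norm_num
    · right; left; rw [hst_eq, h]; norm_num
    · right; right; rw [hst_eq, h]; norm_num
  -- the reflected weight
  set r : E := rsRefl (α 0) χ₁ with hr_def
  have hr : r = χ₁ - c • α 0 := by rw [hr_def, hc_def]; rfl
  have hω1x : rsRefl (α 1) χ₁ = χ₁ := by
    show χ₁ - (2 * ⟪χ₁, α 1⟫ / ⟪α 1, α 1⟫) • α 1 = χ₁
    rw [hχ₁]
    simp
  have hω0r : rsRefl (α 0) r = χ₁ := by
    rw [hr_def]; exact rsRefl_invol (α 0) (hN 0).ne' χ₁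
  -- the key vector identity
  have hvec : (c * s) • α 1 = (s * t - 4) • χ₁ + (2 * c) • α 0 := by
    have hz : (c * s) • α 1 - ((s * t - 4) • χ₁ + (2 * c) • α 0) = 0 := by
      apply hperp
      · rw [inner_sub_left, inner_add_left, real_inner_smul_left, real_inner_smul_left,
          real_inner_smul_left, ha10, hxa0]
        ring
      · rw [inner_sub_left, inner_add_left, real_inner_smul_left, real_inner_smul_left,
          real_inner_smul_left, hχ₁, ha01]
        ring
    exact sub_eq_zero.mp hz
  have hω1r : rsRefl (α 1) r = (s * t - 2) • χ₁ - r := by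
    have hco : 2 * ⟪r, α 1⟫ / ⟪α 1, α 1⟫ = -(c * s) := by
      rw [hr, inner_sub_left, real_inner_smul_left, hχ₁, ha01]
      field_simp [(hN 1).ne']
      ring_nf; rw [mul_inv_cancel_right₀ (hN 1).ne']
    show r - (2 * ⟪r, α 1⟫ / ⟪α 1, α 1⟫) • α 1 = _
    rw [hco, neg_smul, sub_neg_eq_add, hvec, hr]
    module
  -- the invariant set of coordinate pairs
  obtain ⟨L, hL1, hLswap, hLflip, hLgood⟩ :
      ∃ L : Set (ℝ × ℝ), ((1:ℝ), (0:ℝ)) ∈ L ∧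
        (∀ p ∈ L, ((p.2 : ℝ), (p.1 : ℝ)) ∈ L) ∧
        (∀ p ∈ L, ((p.1 + (s * t - 2) * p.2 : ℝ), (-p.2 : ℝ)) ∈ L) ∧
        (∀ p ∈ L, ¬(0 < p.1 ∧ 0 < p.2)) := by
    rcases hST13 with h | h | h
    · refine ⟨{((1:ℝ),(0:ℝ)), ((0:ℝ),(1:ℝ)), ((-1:ℝ),(-1:ℝ))}, by norm_num, ?_, ?_, ?_⟩ <;>
        (intro p hp;
         simp only [Set.mem_insert_iff, Set.mem_singleton_iff, Prod.mk.injEq] at hp ⊢;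
         rcases hp with rfl | rfl | rfl <;> norm_num [h])
    · refine ⟨{((1:ℝ),(0:ℝ)), ((0:ℝ),(1:ℝ)), ((-1:ℝ),(0:ℝ)), ((0:ℝ),(-1:ℝ))}, by norm_num,
        ?_, ?_, ?_⟩ <;>
        (intro p hp;
         simp only [Set.mem_insert_iff, Set.mem_singleton_iff, Prod.mk.injEq] at hp ⊢;
         rcases hp with rfl | rfl | rfl | rfl <;> norm_num [h])
    · refine ⟨{((1:ℝ),(0:ℝ)), ((0:ℝ),(1:ℝ)), ((1:ℝ),(-1:ℝ)), ((-1:ℝ),(1:ℝ)), ((0:ℝ),(-1:ℝ)),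
        ((-1:ℝ),(0:ℝ))}, by norm_num, ?_, ?_, ?_⟩ <;>
        (intro p hp;
         simp only [Set.mem_insert_iff, Set.mem_singleton_iff, Prod.mk.injEq] at hp ⊢;
         rcases hp with rfl | rfl | rfl | rfl | rfl | rfl <;> norm_num [h])
  -- the invariant set of vectors
  set SS : Set E := {y | ∃ p : ℝ × ℝ, p ∈ L ∧ y = p.1 • χ₁ + p.2 • r} with hSS_def
  have hχSS : χ₁ ∈ SS := ⟨((1:ℝ), (0:ℝ)), hL1, by simp⟩
  have hSS0 : ∀ y ∈ SS, rsRefl (α 0) y ∈ SS := by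
    rintro y ⟨⟨a, b⟩, hp, rfl⟩
    refine ⟨(b, a), hLswap _ hp, ?_⟩
    rw [rsRefl_add, rsRefl_smul, rsRefl_smul, ← hr_def, hω0r]
    exact add_comm _ _
  have hSS1 : ∀ y ∈ SS, rsRefl (α 1) y ∈ SS := by
    rintro y ⟨⟨a, b⟩, hp, rfl⟩
    refine ⟨(a + (s * t - 2) * b, -b), hLflip _ hp, ?_⟩
    rw [rsRefl_add, rsRefl_smul, rsRefl_smul, hω1x, hω1r]
    module
  -- expansion of inner products of roots with simple roots
  have hinn : ∀ l ∈ Φ, ∀ i : Fin 2,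
      ⟪l, α i⟫ = (m l 0 : ℝ) * ⟪α 0, α i⟫ + (m l 1 : ℝ) * ⟪α 1, α i⟫ := by
    intro l hl i
    nth_rewrite 1 [hexp l hl]
    rw [Fin.sum_univ_two, inner_add_left, real_inner_smul_left, real_inner_smul_left]
  -- main induction: reflections in positive roots preserve SS
  have hroot : ∀ n : ℕ, ∀ l ∈ Φ, 0 ≤ m l 0 → 0 ≤ m l 1 → m l 0 + m l 1 ≤ (n : ℤ) →
      ∀ y ∈ SS, rsRefl l y ∈ SS := by
    intro n
    induction n with
    | zero =>
      intro l hl hm0 hm1 hsum y hy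
      exfalso
      have h00 : m l 0 = 0 ∧ m l 1 = 0 := by
        constructor <;> omega
      have : l = 0 := by
        rw [hexp l hl, Fin.sum_univ_two, h00.1, h00.2]
        simp
      exact h0 (this ▸ hl)
    | succ n ih =>
      intro l hl hm0 hm1 hsum y hy
      have hlne : l ≠ 0 := fun h => h0 (h ▸ hl)
      by_cases hq : m l 1 = 0
      · -- l is a multiple of α 0
        have hm0ne : m l 0 ≠ 0 := by
          intro h
          apply hlne
          rw [hexp l hl, Fin.sum_univ_two, h, hq]
          simp
        have hleq : l = ((m l 0 : ℝ)) • α 0 := by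
          nth_rewrite 1 [hexp l hl]
          rw [Fin.sum_univ_two, hq]
          simp
        rw [show rsRefl l y = rsRefl (α 0) y by
          rw [hleq, rsRefl_scale (α 0) _ (by exact_mod_cast hm0ne) y]]
        exact hSS0 y hy
      · by_cases hp : m l 0 = 0
        · -- l is a multiple of α 1
          have hleq : l = ((m l 1 : ℝ)) • α 1 := by
            nth_rewrite 1 [hexp l hl]
            rw [Fin.sum_univ_two, hp]
            simp
          rw [show rsRefl l y = rsRefl (α 1) y by
            rw [hleq, rsRefl_scale (α 1) _ (by exact_mod_cast hq) y]]
          exact hSS1 y hy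
        · -- both coordinates positive
          have hll : 0 < ⟪l, l⟫ :=
            lt_of_le_of_ne real_inner_self_nonneg
              (fun h => hlne (inner_self_eq_zero.mp h.symm))
          have hm0R : (0:ℝ) ≤ (m l 0 : ℝ) := by exact_mod_cast hm0
          have hm1R : (0:ℝ) ≤ (m l 1 : ℝ) := by exact_mod_cast hm1
          have hex : 0 < ⟪l, α 0⟫ ∨ 0 < ⟪l, α 1⟫ := by
            by_contra hcon
            push_neg at hcon
            obtain ⟨h1, h2⟩ := hcon
            have e1 : ⟪l, l⟫ = (m l 0 : ℝ) * ⟪l, α 0⟫ + (m l 1 : ℝ) * ⟪l, α 1⟫ := by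
              nth_rewrite 2 [hexp l hl]
              rw [Fin.sum_univ_two, inner_add_right, real_inner_smul_right,
                real_inner_smul_right]
            nlinarith
          rcases hex with hi | hi
          · -- reflect in α 0
            obtain ⟨z, hz⟩ := hint (α 0) (hα 0) l hl
            have hzpos : 0 < (z : ℝ) := by
              rw [← hz]
              exact div_pos (by linarith) (hN 0)
            have hz1 : 1 ≤ z := by exact_mod_cast hzpos
            have hl'Φ : rsRefl (α 0) l ∈ Φ := hrefl _ (hα 0) l hl
            have hl'eq : rsRefl (α 0) l = ((m l 0 : ℝ) - (z : ℝ)) • α 0 + (m l 1 : ℝ) • α 1 := by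
              show l - (2 * ⟪l, α 0⟫ / ⟪α 0, α 0⟫) • α 0 = _
              rw [hz]
              nth_rewrite 1 [hexp l hl]
              rw [Fin.sum_univ_two]
              module
            obtain ⟨hc0, hc1⟩ := hcoeff _ hl'Φ _ _ hl'eq
            have hh0 : m (rsRefl (α 0) l) 0 = m l 0 - z := by
              have : ((m l 0 - z : ℤ) : ℝ) = (m l 0 : ℝ) - (z : ℝ) := by push_cast; ring
              exact_mod_cast hc0.trans this.symm
            have hh1 : m (rsRefl (α 0) l) 1 = m l 1 := by exact_mod_cast hc1
            have hsgn : 0 ≤ m (rsRefl (α 0) l) 0 ∧ 0 ≤ m (rsRefl (α 0) l) 1 := by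
              rcases hsign _ hl'Φ with h | h
              · exact ⟨h 0, h 1⟩
              · exfalso
                have := h 1
                omega
            have hsum' : m (rsRefl (α 0) l) 0 + m (rsRefl (α 0) l) 1 ≤ (n : ℤ) := by
              push_cast at hsum ⊢
              omega
            have hconj : rsRefl l y = rsRefl (α 0) (rsRefl (rsRefl (α 0) l) (rsRefl (α 0) y)) := by
              nth_rewrite 1 [show l = rsRefl (α 0) (rsRefl (α 0) l) from
                (rsRefl_invol (α 0) (hN 0).ne' l).symm]
              exact rsRefl_conj (α 0) (rsRefl (α 0) l) (hN 0).ne' y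
            rw [hconj]
            exact hSS0 _ (ih _ hl'Φ hsgn.1 hsgn.2 hsum' _ (hSS0 y hy))
          · -- reflect in α 1
            obtain ⟨z, hz⟩ := hint (α 1) (hα 1) l hl
            have hzpos : 0 < (z : ℝ) := by
              rw [← hz]
              exact div_pos (by linarith) (hN 1)
            have hz1 : 1 ≤ z := by exact_mod_cast hzpos
            have hl'Φ : rsRefl (α 1) l ∈ Φ := hrefl _ (hα 1) l hl
            have hl'eq : rsRefl (α 1) l = (m l 0 : ℝ) • α 0 + ((m l 1 : ℝ) - (z : ℝ)) • α 1 := by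
              show l - (2 * ⟪l, α 1⟫ / ⟪α 1, α 1⟫) • α 1 = _
              rw [hz]
              nth_rewrite 1 [hexp l hl]
              rw [Fin.sum_univ_two]
              module
            obtain ⟨hc0, hc1⟩ := hcoeff _ hl'Φ _ _ hl'eq
            have hh0 : m (rsRefl (α 1) l) 0 = m l 0 := by exact_mod_cast hc0
            have hh1 : m (rsRefl (α 1) l) 1 = m l 1 - z := by
              have : ((m l 1 - z : ℤ) : ℝ) = (m l 1 : ℝ) - (z : ℝ) := by push_cast; ring
              exact_mod_cast hc1.trans this.symm
            have hsgn : 0 ≤ m (rsRefl (α 1) l) 0 ∧ 0 ≤ m (rsRefl (α 1) l) 1 := by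
              rcases hsign _ hl'Φ with h | h
              · exact ⟨h 0, h 1⟩
              · exfalso
                have := h 0
                omega
            have hsum' : m (rsRefl (α 1) l) 0 + m (rsRefl (α 1) l) 1 ≤ (n : ℤ) := by
              push_cast at hsum ⊢
              omega
            have hconj : rsRefl l y = rsRefl (α 1) (rsRefl (rsRefl (α 1) l) (rsRefl (α 1) y)) := by
              nth_rewrite 1 [show l = rsRefl (α 1) (rsRefl (α 1) l) from
                (rsRefl_invol (α 1) (hN 1).ne' l).symm]
              exact rsRefl_conj (α 1) (rsRefl (α 1) l) (hN 1).ne' y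
            rw [hconj]
            exact hSS1 _ (ih _ hl'Φ hsgn.1 hsgn.2 hsum' _ (hSS1 y hy))
  -- all root reflections preserve SS
  have hrootAll : ∀ l ∈ Φ, ∀ y ∈ SS, rsRefl l y ∈ SS := by
    intro l hl y hy
    rcases hsign l hl with h | h
    · exact hroot (m l 0 + m l 1).toNat l hl (h 0) (h 1)
        (by have := h 0; have := h 1; omega) y hy
    · -- use -l instead
      have hnegΦ : -l ∈ Φ := by
        have h2 : rsRefl l l = -l := by
          show l - (2 * ⟪l, l⟫ / ⟪l, l⟫) • l = -l
          have hlne : l ≠ 0 := fun hh => h0 (hh ▸ hl)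
          have hll : ⟪l, l⟫ ≠ 0 := fun hh => hlne (inner_self_eq_zero.mp hh)
          rw [show 2 * ⟪l, l⟫ / ⟪l, l⟫ = 2 by field_simp]
          module
        exact h2 ▸ hrefl l hl l hl
      have hnegeq : -l = (-(m l 0 : ℝ)) • α 0 + (-(m l 1 : ℝ)) • α 1 := by
        nth_rewrite 1 [hexp l hl]
        rw [Fin.sum_univ_two]
        module
      obtain ⟨hc0, hc1⟩ := hcoeff _ hnegΦ _ _ hnegeq
      have hh0 : m (-l) 0 = -(m l 0) := by exact_mod_cast hc0
      have hh1 : m (-l) 1 = -(m l 1) := by exact_mod_cast hc1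
      rw [← rsRefl_neg l y]
      exact hroot (m (-l) 0 + m (-l) 1).toNat (-l) hnegΦ
        (by have := h 0; omega) (by have := h 1; omega)
        (by have := h 0; have := h 1; omega) y hy
  -- conclude by closure induction
  have hWSS : ∀ y ∈ SS, w y ∈ SS := by
    refine Submonoid.closure_induction (motive := fun f _ => ∀ y ∈ SS, f y ∈ SS)
      ?_ ?_ ?_ hw
    · rintro f ⟨l, hl, rfl⟩ y hy
      exact hrootAll l hl y hy
    · intro y hy
      exact hy
    · intro f g _ _ hf hg y hy
      exact hf _ (hg y hy)
  obtain ⟨⟨a, b⟩, hp, hy⟩ := hWSS χ₁ hχSS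
  exact ⟨a, b, hLgood _ hp, hy⟩
end

section
/- Let the unit square I = [0,1]² be covered by two closed sets X₁ and X₂. For i = 1,2 let F_i⁺ and F_i⁻ be the facets of I defined by x_i = 1 and x_i = 0 respectively. Then for some i ∈ {1,2}, some connected component of X_i intersects both F_i⁺ and F_i⁻. -/
namespace Stmt17

/-! ### Combinatorial core: a discrete index (winding number) argument -/

/-- step between two arrow directions in `ZMod 4`, in `{-1,0,1}` (junk `0` for opposite). -/
def stp (p q : ZMod 4) : ℤ :=
  if q = p then 0 else if q = p + 1 then 1 else if q = p + 3 then -1 else 0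

lemma stp_antisymm : ∀ p q : ZMod 4, stp p q = - stp q p := by decide

lemma cell_sum : ∀ p q r t : ZMod 4, q ≠ p + 2 → r ≠ q + 2 → t ≠ r + 2 → p ≠ t + 2 →
    r ≠ p + 2 → t ≠ q + 2 → stp p q + stp q r + stp r t + stp t p = 0 := by decide

def r0 (x : ZMod 4) : ℤ := x.val
def r1 (x : ZMod 4) : ℤ := x.val
def r2 (x : ZMod 4) : ℤ := if x = 0 then 4 else x.val
def r3 (x : ZMod 4) : ℤ := if x = 0 then 4 else if x = 1 then 5 else x.val

lemma stp_r0 : ∀ p q : ZMod 4, p ≠ 3 → q ≠ 3 → q ≠ p + 2 → p ≠ q + 2 →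
    stp p q = r0 q - r0 p := by decide
lemma stp_r1 : ∀ p q : ZMod 4, p ≠ 0 → q ≠ 0 → q ≠ p + 2 → p ≠ q + 2 →
    stp p q = r1 q - r1 p := by decide
lemma stp_r2 : ∀ p q : ZMod 4, p ≠ 1 → q ≠ 1 → q ≠ p + 2 → p ≠ q + 2 →
    stp p q = r2 q - r2 p := by decide
lemma stp_r3 : ∀ p q : ZMod 4, p ≠ 2 → q ≠ 2 → q ≠ p + 2 → p ≠ q + 2 →
    stp p q = r3 q - r3 p := by decide

lemma corner_br : ∀ p : ZMod 4, p ≠ 0 → p ≠ 3 → r1 p = r0 p := by decide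
lemma corner_tr : ∀ p : ZMod 4, p ≠ 0 → p ≠ 1 → r2 p = r1 p := by decide
lemma corner_tl : ∀ p : ZMod 4, p ≠ 1 → p ≠ 2 → r3 p = r2 p := by decide
lemma corner_bl : ∀ p : ZMod 4, p ≠ 2 → p ≠ 3 → r3 p = r0 p + 4 := by decide

/-- The combinatorial core: an arrow field on the grid `[0,n]²` with no opposite arrows on
8-adjacent vertices and never pointing outward on the boundary is impossible. -/
lemma grid_false (n : ℕ) (hn : 1 ≤ n) (d : ℕ → ℕ → ZMod 4)
    (hadj : ∀ a b a' b', a ≤ n → b ≤ n → a' ≤ n → b' ≤ n →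
      (a' = a ∨ a' = a + 1 ∨ a = a' + 1) → (b' = b ∨ b' = b + 1 ∨ b = b' + 1) →
      d a' b' ≠ d a b + 2)
    (hl : ∀ b, b ≤ n → d 0 b ≠ 2) (hr : ∀ b, b ≤ n → d n b ≠ 0)
    (hb : ∀ a, a ≤ n → d a 0 ≠ 3) (ht : ∀ a, a ≤ n → d a n ≠ 1) : False := by
  set h : ℕ → ℕ → ℤ := fun a b => stp (d a b) (d (a + 1) b) with hh
  set v : ℕ → ℕ → ℤ := fun a b => stp (d a b) (d a (b + 1)) with hv
  have key : ∀ a b, a < n → b < n →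
      h a b + v (a + 1) b - h a (b + 1) - v a b = 0 := by
    intro a b ha hb'
    have h1 := hadj a b (a+1) b (by omega) (by omega) (by omega) (by omega) (by omega) (by omega)
    have h2 := hadj (a+1) b (a+1) (b+1) (by omega) (by omega) (by omega) (by omega) (by omega) (by omega)
    have h3 := hadj (a+1) (b+1) a (b+1) (by omega) (by omega) (by omega) (by omega) (by omega) (by omega)
    have h4 := hadj a (b+1) a b (by omega) (by omega) (by omega) (by omega) (by omega) (by omega)
    have h5 := hadj a b (a+1) (b+1) (by omega) (by omega) (by omega) (by omega) (by omega) (by omega)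
    have h6 := hadj (a+1) b a (b+1) (by omega) (by omega) (by omega) (by omega) (by omega) (by omega)
    have := cell_sum (d a b) (d (a+1) b) (d (a+1) (b+1)) (d a (b+1)) h1 h2 h3 h4 h5 h6
    have e1 : h a (b+1) = - stp (d (a+1) (b+1)) (d a (b+1)) := by
      rw [hh]; exact stp_antisymm _ _
    have e2 : v a b = - stp (d a (b+1)) (d a b) := by
      rw [hv]; exact stp_antisymm _ _
    simp only [hh, hv] at *
    omega
  have S0 : (∑ a ∈ Finset.range n, ∑ b ∈ Finset.range n,
      (h a b + v (a + 1) b - h a (b + 1) - v a b)) = 0 := by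
    apply Finset.sum_eq_zero; intro a ha
    apply Finset.sum_eq_zero; intro b hb'
    exact key a b (Finset.mem_range.mp ha) (Finset.mem_range.mp hb')
  have S1 : (∑ a ∈ Finset.range n, ∑ b ∈ Finset.range n,
      (h a b + v (a + 1) b - h a (b + 1) - v a b))
      = (∑ a ∈ Finset.range n, (h a 0 - h a n))
        + (∑ b ∈ Finset.range n, (v n b - v 0 b)) := by
    have e : ∀ a b : ℕ, h a b + v (a + 1) b - h a (b + 1) - v a b
        = (h a b - h a (b+1)) + (v (a+1) b - v a b) := by intro a b; ring
    simp only [e, Finset.sum_add_distrib]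
    congr 1
    · apply Finset.sum_congr rfl; intro a _
      exact Finset.sum_range_sub' (fun b => h a b) n
    · rw [Finset.sum_comm]
      apply Finset.sum_congr rfl; intro b _
      exact Finset.sum_range_sub (fun a => v a b) n
  have hbot : (∑ a ∈ Finset.range n, h a 0) = r0 (d n 0) - r0 (d 0 0) := by
    rw [← Finset.sum_range_sub (fun a => r0 (d a 0)) n]
    apply Finset.sum_congr rfl; intro a ha
    have ha' := Finset.mem_range.mp ha
    exact stp_r0 _ _ (hb a (by omega)) (hb (a+1) (by omega))
      (hadj a 0 (a+1) 0 (by omega) (by omega) (by omega) (by omega) (by omega) (by omega))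
      (hadj (a+1) 0 a 0 (by omega) (by omega) (by omega) (by omega) (by omega) (by omega))
  have htop : (∑ a ∈ Finset.range n, h a n) = r2 (d n n) - r2 (d 0 n) := by
    rw [← Finset.sum_range_sub (fun a => r2 (d a n)) n]
    apply Finset.sum_congr rfl; intro a ha
    have ha' := Finset.mem_range.mp ha
    exact stp_r2 _ _ (ht a (by omega)) (ht (a+1) (by omega))
      (hadj a n (a+1) n (by omega) (by omega) (by omega) (by omega) (by omega) (by omega))
      (hadj (a+1) n a n (by omega) (by omega) (by omega) (by omega) (by omega) (by omega))
  have hrt : (∑ b ∈ Finset.range n, v n b) = r1 (d n n) - r1 (d n 0) := by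
    rw [← Finset.sum_range_sub (fun b => r1 (d n b)) n]
    apply Finset.sum_congr rfl; intro b hb'
    have hb'' := Finset.mem_range.mp hb'
    exact stp_r1 _ _ (hr b (by omega)) (hr (b+1) (by omega))
      (hadj n b n (b+1) (by omega) (by omega) (by omega) (by omega) (by omega) (by omega))
      (hadj n (b+1) n b (by omega) (by omega) (by omega) (by omega) (by omega) (by omega))
  have hlt : (∑ b ∈ Finset.range n, v 0 b) = r3 (d 0 n) - r3 (d 0 0) := by
    rw [← Finset.sum_range_sub (fun b => r3 (d 0 b)) n]
    apply Finset.sum_congr rfl; intro b hb'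
    have hb'' := Finset.mem_range.mp hb'
    exact stp_r3 _ _ (hl b (by omega)) (hl (b+1) (by omega))
      (hadj 0 b 0 (b+1) (by omega) (by omega) (by omega) (by omega) (by omega) (by omega))
      (hadj 0 (b+1) 0 b (by omega) (by omega) (by omega) (by omega) (by omega) (by omega))
  rw [S1] at S0
  rw [Finset.sum_sub_distrib, Finset.sum_sub_distrib, hbot, htop, hrt, hlt] at S0
  have c1 := corner_br (d n 0) (hr 0 (by omega)) (hb n (by omega))
  have c2 := corner_tr (d n n) (hr n (by omega)) (ht n (by omega))
  have c3 := corner_tl (d 0 n) (ht 0 (by omega)) (hl n (by omega))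
  have c4 := corner_bl (d 0 0) (hl 0 (by omega)) (hb 0 (by omega))
  omega

/-! ### Topological separation lemma -/

abbrev E := Fin 2 → ℝ

lemma sep (Xi : Set E) (hX : IsClosed Xi) (hXs : Xi ⊆ Set.Icc 0 1) (P M : Set E)
    (hP : IsClosed P) (hM : IsClosed M)
    (h : ∀ x ∈ Xi, (connectedComponentIn Xi x ∩ P).Nonempty →
      ¬ (connectedComponentIn Xi x ∩ M).Nonempty) :
    ∃ C D : Set E, Xi = C ∪ D ∧ Xi ∩ P ⊆ C ∧ Xi ∩ M ⊆ D ∧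
      ∃ δ : ℝ, 0 < δ ∧ ∀ x ∈ C, ∀ y ∈ D, δ ≤ dist x y := by
  have hcomp : IsCompact Xi := IsCompact.of_isClosed_subset isCompact_Icc hX hXs
  haveI : CompactSpace Xi := isCompact_iff_compactSpace.mp hcomp
  set A : Set Xi := Subtype.val ⁻¹' P with hA
  set B : Set Xi := Subtype.val ⁻¹' M with hB
  have hAc : IsClosed A := hP.preimage continuous_subtype_val
  have hBc : IsClosed B := hM.preimage continuous_subtype_val
  have hdisj : ∀ x ∈ A, connectedComponent x ∩ B = ∅ := by
    intro x hx
    have hxX : (x : E) ∈ Xi := x.2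
    have h1 : (connectedComponentIn Xi x ∩ P).Nonempty :=
      ⟨x, mem_connectedComponentIn hxX, hx⟩
    have h2 := h x hxX h1
    rw [Set.eq_empty_iff_forall_notMem]
    intro y hy
    exact h2 ⟨y, by
      rw [connectedComponentIn_eq_image hxX]
      exact ⟨Set.mem_image_of_mem _ hy.1, hy.2⟩⟩
  have hclop : ∀ x ∈ A, ∃ Z : Set Xi, IsClopen Z ∧ x ∈ Z ∧ Z ∩ B = ∅ := by
    intro x hx
    have hcc := connectedComponent_eq_iInter_isClopen x
    have hBcomp : IsCompact B := hBc.isCompact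
    have hcov : B ⊆ ⋃ Z : { Z : Set Xi // IsClopen Z ∧ x ∈ Z }, (Z : Set Xi)ᶜ := by
      intro y hy
      by_contra hyn
      simp only [Set.mem_iUnion, Set.mem_compl_iff, not_exists, not_not] at hyn
      have : y ∈ connectedComponent x := by
        rw [hcc, Set.mem_iInter]; intro Z; exact hyn Z
      have h' := hdisj x hx
      rw [Set.eq_empty_iff_forall_notMem] at h'
      exact h' y ⟨‹y ∈ connectedComponent x›, hy⟩
    obtain ⟨t, ht⟩ := hBcomp.elim_finite_subcover _ (fun Z => (Z.2.1.1).isOpen_compl) hcov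
    refine ⟨⋂ Z ∈ t, (Z : Set Xi), isClopen_biInter_finset (fun Z _ => Z.2.1), ?_, ?_⟩
    · exact Set.mem_biInter (fun Z _ => Z.2.2)
    · rw [Set.eq_empty_iff_forall_notMem]
      rintro y ⟨hy1, hy2⟩
      obtain ⟨Z, hZt, hZ⟩ := Set.mem_iUnion₂.mp (ht hy2)
      exact hZ (Set.mem_iInter₂.mp hy1 Z hZt)
  choose! Z hZclop hZmem hZdisj using hclop
  have hAcomp : IsCompact A := hAc.isCompact
  have hcovA : A ⊆ ⋃ x : A, Z x := fun x hx =>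
    Set.mem_iUnion.mpr ⟨⟨x, hx⟩, hZmem x hx⟩
  obtain ⟨t, ht⟩ := hAcomp.elim_finite_subcover (fun x : A => Z x)
    (fun x => (hZclop x x.2).isOpen) hcovA
  set U : Set Xi := ⋃ x ∈ t, Z x with hU
  have hUclop : IsClopen U := isClopen_biUnion_finset (fun x _ => hZclop x x.2)
  have hUA : A ⊆ U := by
    intro x hx
    obtain ⟨y, hyt, hy⟩ := Set.mem_iUnion₂.mp (ht hx)
    exact Set.mem_biUnion hyt hy
  have hUB : U ∩ B = ∅ := by
    rw [Set.eq_empty_iff_forall_notMem]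
    rintro y ⟨hy1, hy2⟩
    obtain ⟨x, hxt, hx⟩ := Set.mem_iUnion₂.mp hy1
    have h' := hZdisj x x.2
    rw [Set.eq_empty_iff_forall_notMem] at h'
    exact h' y ⟨hx, hy2⟩
  refine ⟨Subtype.val '' U, Subtype.val '' Uᶜ, ?_, ?_, ?_, ?_⟩
  · rw [← Set.image_union, Set.union_compl_self, Set.image_univ, Subtype.range_coe]
  · rintro x ⟨hx1, hx2⟩
    exact ⟨⟨x, hx1⟩, hUA hx2, rfl⟩
  · rintro x ⟨hx1, hx2⟩
    refine ⟨⟨x, hx1⟩, ?_, rfl⟩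
    intro hmem
    rw [Set.eq_empty_iff_forall_notMem] at hUB
    exact hUB ⟨x, hx1⟩ ⟨hmem, hx2⟩
  · have hCc : IsCompact (Subtype.val '' U) :=
      (hUclop.isClosed.isCompact).image continuous_subtype_val
    have hDc : IsCompact (Subtype.val '' Uᶜ) :=
      (hUclop.compl.isClosed.isCompact).image continuous_subtype_val
    rcases Set.eq_empty_or_nonempty (Subtype.val '' U) with hCe | hCn
    · exact ⟨1, one_pos, by rw [hCe]; rintro x ⟨⟩⟩
    rcases Set.eq_empty_or_nonempty (Subtype.val '' Uᶜ) with hDe | hDn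
    · exact ⟨1, one_pos, fun x _ y hy => absurd hy (by rw [hDe]; exact id)⟩
    have hcont : Continuous fun p : E => Metric.infDist p (Subtype.val '' Uᶜ) :=
      Metric.continuous_infDist_pt _
    obtain ⟨x₀, hx₀C, hx₀min⟩ := hCc.exists_isMinOn hCn hcont.continuousOn
    have hx₀notin : x₀ ∉ Subtype.val '' Uᶜ := by
      rintro ⟨y, hy1, hy2⟩
      obtain ⟨z, hz1, hz2⟩ := hx₀C
      have : z = y := Subtype.val_injective (hz2.trans hy2.symm)
      exact hy1 (this ▸ hz1)
    have hpos : 0 < Metric.infDist x₀ (Subtype.val '' Uᶜ) :=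
      (hDc.isClosed.notMem_iff_infDist_pos hDn).mp hx₀notin
    refine ⟨_, hpos, fun x hx y hy => ?_⟩
    exact le_trans (hx₀min hx) (Metric.infDist_le_dist_of_mem hy)

/-! ### Discretization -/

lemma facet_closed (i : Fin 2) (c : ℝ) : IsClosed {y ∈ Set.Icc (0:E) 1 | y i = c} := by
  have : {y ∈ Set.Icc (0:E) 1 | y i = c} = Set.Icc (0:E) 1 ∩ {y : E | y i = c} := rfl
  rw [this]
  exact isClosed_Icc.inter (isClosed_eq (continuous_apply i) continuous_const)

section Grid

variable (N : ℕ)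

/-- grid points -/
noncomputable def g (a b : ℕ) : E := fun j : Fin 2 => if j = 0 then (a:ℝ)/N else (b:ℝ)/N

lemma g_zero (a b : ℕ) : g N a b 0 = (a:ℝ)/N := by simp [g]
lemma g_one (a b : ℕ) : g N a b 1 = (b:ℝ)/N := by
  have : (1 : Fin 2) ≠ 0 := by decide
  simp [g, this]

lemma g_mem (hN : 1 ≤ N) {a b : ℕ} (ha : a ≤ N) (hb : b ≤ N) :
    g N a b ∈ Set.Icc (0:E) 1 := by
  have hN0 : (0:ℝ) < N := by exact_mod_cast hN
  constructor <;> intro j <;> by_cases hj : j = 0 <;>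
      simp only [g, hj, if_true, if_false, Pi.zero_apply, Pi.one_apply]
  · positivity
  · positivity
  · rw [div_le_one hN0]; exact_mod_cast ha
  · rw [div_le_one hN0]; exact_mod_cast hb

lemma g_dist (hN : 1 ≤ N) {a b a' b' : ℕ}
    (hA : a' = a ∨ a' = a + 1 ∨ a = a' + 1) (hB : b' = b ∨ b' = b + 1 ∨ b = b' + 1) :
    dist (g N a b) (g N a' b') ≤ 1 / N := by
  have hN0 : (0:ℝ) < N := by exact_mod_cast hN
  rw [dist_pi_le_iff (by positivity)]
  intro j
  have key : ∀ x y : ℕ, (x = y ∨ x = y + 1 ∨ y = x + 1) →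
      dist ((x:ℝ)/N) ((y:ℝ)/N) ≤ 1 / N := by
    intro x y hxy
    rw [Real.dist_eq, div_sub_div_same, abs_div, abs_of_pos hN0,
      div_le_div_iff_of_pos_right hN0]
    rcases hxy with h | h | h <;> subst h <;>
      [simp; skip; skip] <;> · push_cast; rw [abs_le]; constructor <;> linarith
  by_cases hj : j = 0 <;> simp only [g, hj, if_true, if_false]
  · have := key a a' (by tauto)
    simpa [Real.dist_eq] using this
  · have := key b b' (by tauto)
    simpa [Real.dist_eq] using this

end Grid

end Stmt17

/-- Lebesgue: Let the unit square `I = [0,1]²` be covered by two closed sets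
`X₁, X₂ ⊆ I`.  Then for some `i ∈ {1,2}`, a connected component of `X_i` intersects both of
the opposite facets `F_i⁺ = {x ∈ I : x_i = 1}` and `F_i⁻ = {x ∈ I : x_i = 0}`. -/
theorem stmt17 (X : Fin 2 → Set (Fin 2 → ℝ))
    (hclosed : ∀ i, IsClosed (X i))
    (hsub : ∀ i, X i ⊆ Set.Icc 0 1)
    (hcover : Set.Icc (0 : Fin 2 → ℝ) 1 ⊆ X 0 ∪ X 1) :
    ∃ (i : Fin 2) (x : Fin 2 → ℝ), x ∈ X i ∧
      (connectedComponentIn (X i) x ∩ {y ∈ Set.Icc (0 : Fin 2 → ℝ) 1 | y i = 1}).Nonempty ∧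
      (connectedComponentIn (X i) x ∩ {y ∈ Set.Icc (0 : Fin 2 → ℝ) 1 | y i = 0}).Nonempty := by
  classical
  by_contra hc
  open Stmt17 in
  obtain ⟨C₀, D₀, hX0, hP0, hM0, δ₀, hδ₀, hd₀⟩ :=
    Stmt17.sep (X 0) (hclosed 0) (hsub 0) _ _ (Stmt17.facet_closed 0 1) (Stmt17.facet_closed 0 0)
      (fun x hx h1 h2 => hc ⟨0, x, hx, h1, h2⟩)
  open Stmt17 in
  obtain ⟨C₁, D₁, hX1, hP1, hM1, δ₁, hδ₁, hd₁⟩ :=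
    Stmt17.sep (X 1) (hclosed 1) (hsub 1) _ _ (Stmt17.facet_closed 1 1) (Stmt17.facet_closed 1 0)
      (fun x hx h1 h2 => hc ⟨1, x, hx, h1, h2⟩)
  have hC₀X : C₀ ⊆ X 0 := by rw [hX0]; exact Set.subset_union_left
  have hD₀X : D₀ ⊆ X 0 := by rw [hX0]; exact Set.subset_union_right
  have hC₁X : C₁ ⊆ X 1 := by rw [hX1]; exact Set.subset_union_left
  have hD₁X : D₁ ⊆ X 1 := by rw [hX1]; exact Set.subset_union_right
  obtain ⟨n, hn⟩ := exists_nat_one_div_lt (lt_min hδ₀ hδ₁)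
  set N : ℕ := n + 1 with hNdef
  have hN1 : 1 ≤ N := Nat.le_add_left 1 n
  have hN0 : (0:ℝ) < N := by exact_mod_cast hN1
  have hmesh : 1 / (N:ℝ) < min δ₀ δ₁ := by
    have : ((n:ℝ) + 1) = (N:ℝ) := by push_cast [hNdef]; ring
    rwa [this] at hn
  set d : ℕ → ℕ → ZMod 4 := fun a b =>
    if Stmt17.g N a b ∈ X 0 then (if Stmt17.g N a b ∈ C₀ then 2 else 0)
    else (if Stmt17.g N a b ∈ C₁ then 3 else 1) with hd
  have hd2 : ∀ a b, d a b = 2 → Stmt17.g N a b ∈ C₀ := by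
    intro a b h
    by_cases h0 : Stmt17.g N a b ∈ X 0
    · by_cases h1 : Stmt17.g N a b ∈ C₀
      · exact h1
      · have : d a b = 0 := by simp [hd, h0, h1]
        rw [this] at h; exact absurd h (by decide)
    · by_cases h1 : Stmt17.g N a b ∈ C₁
      · have : d a b = 3 := by simp [hd, h0, h1]
        rw [this] at h; exact absurd h (by decide)
      · have : d a b = 1 := by simp [hd, h0, h1]
        rw [this] at h; exact absurd h (by decide)
  have hd0 : ∀ a b, d a b = 0 → Stmt17.g N a b ∈ D₀ := by
    intro a b h
    by_cases h0 : Stmt17.g N a b ∈ X 0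
    · by_cases h1 : Stmt17.g N a b ∈ C₀
      · have : d a b = 2 := by simp [hd, h0, h1]
        rw [this] at h; exact absurd h (by decide)
      · have h2 := h0; rw [hX0] at h2
        rcases h2 with h' | h'
        · exact absurd h' h1
        · exact h'
    · by_cases h1 : Stmt17.g N a b ∈ C₁
      · have : d a b = 3 := by simp [hd, h0, h1]
        rw [this] at h; exact absurd h (by decide)
      · have : d a b = 1 := by simp [hd, h0, h1]
        rw [this] at h; exact absurd h (by decide)
  have hd3 : ∀ a b, d a b = 3 → Stmt17.g N a b ∈ C₁ := by
    intro a b h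
    by_cases h0 : Stmt17.g N a b ∈ X 0
    · by_cases h1 : Stmt17.g N a b ∈ C₀
      · have : d a b = 2 := by simp [hd, h0, h1]
        rw [this] at h; exact absurd h (by decide)
      · have : d a b = 0 := by simp [hd, h0, h1]
        rw [this] at h; exact absurd h (by decide)
    · by_cases h1 : Stmt17.g N a b ∈ C₁
      · exact h1
      · have : d a b = 1 := by simp [hd, h0, h1]
        rw [this] at h; exact absurd h (by decide)
  have hd1 : ∀ a b, a ≤ N → b ≤ N → d a b = 1 → Stmt17.g N a b ∈ D₁ := by
    intro a b ha hb h
    by_cases h0 : Stmt17.g N a b ∈ X 0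
    · by_cases h1 : Stmt17.g N a b ∈ C₀
      · have : d a b = 2 := by simp [hd, h0, h1]
        rw [this] at h; exact absurd h (by decide)
      · have : d a b = 0 := by simp [hd, h0, h1]
        rw [this] at h; exact absurd h (by decide)
    · by_cases h1 : Stmt17.g N a b ∈ C₁
      · have : d a b = 3 := by simp [hd, h0, h1]
        rw [this] at h; exact absurd h (by decide)
      · have hX1mem : Stmt17.g N a b ∈ X 1 := by
          rcases hcover (Stmt17.g_mem N hN1 ha hb) with h' | h'
          · exact absurd h' h0
          · exact h'
        rw [hX1] at hX1mem
        rcases hX1mem with h' | h'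
        · exact absurd h' h1
        · exact h'
  have hl : ∀ b, b ≤ N → d 0 b ≠ 2 := by
    intro b hb h
    have hmem := hd2 0 b h
    have hfacet : Stmt17.g N 0 b ∈ X 0 ∩ {y ∈ Set.Icc (0 : Fin 2 → ℝ) 1 | y 0 = 0} := by
      refine ⟨hC₀X hmem, Stmt17.g_mem N hN1 (by omega) hb, ?_⟩
      rw [Stmt17.g_zero]; simp
    have := hd₀ _ hmem _ (hM0 hfacet)
    rw [dist_self] at this; linarith
  have hr : ∀ b, b ≤ N → d N b ≠ 0 := by
    intro b hb h
    have hmem := hd0 N b h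
    have hfacet : Stmt17.g N N b ∈ X 0 ∩ {y ∈ Set.Icc (0 : Fin 2 → ℝ) 1 | y 0 = 1} := by
      refine ⟨hD₀X hmem, Stmt17.g_mem N hN1 le_rfl hb, ?_⟩
      rw [Stmt17.g_zero]; exact div_self (ne_of_gt hN0)
    have := hd₀ _ (hP0 hfacet) _ hmem
    rw [dist_self] at this; linarith
  have hbt : ∀ a, a ≤ N → d a 0 ≠ 3 := by
    intro a ha h
    have hmem := hd3 a 0 h
    have hfacet : Stmt17.g N a 0 ∈ X 1 ∩ {y ∈ Set.Icc (0 : Fin 2 → ℝ) 1 | y 1 = 0} := by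
      refine ⟨hC₁X hmem, Stmt17.g_mem N hN1 ha (by omega), ?_⟩
      rw [Stmt17.g_one]; simp
    have := hd₁ _ hmem _ (hM1 hfacet)
    rw [dist_self] at this; linarith
  have htp : ∀ a, a ≤ N → d a N ≠ 1 := by
    intro a ha h
    have hmem := hd1 a N ha le_rfl h
    have hfacet : Stmt17.g N a N ∈ X 1 ∩ {y ∈ Set.Icc (0 : Fin 2 → ℝ) 1 | y 1 = 1} := by
      refine ⟨hD₁X hmem, Stmt17.g_mem N hN1 ha le_rfl, ?_⟩
      rw [Stmt17.g_one]; exact div_self (ne_of_gt hN0)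
    have := hd₁ _ (hP1 hfacet) _ hmem
    rw [dist_self] at this; linarith
  have hadj : ∀ a b a' b', a ≤ N → b ≤ N → a' ≤ N → b' ≤ N →
      (a' = a ∨ a' = a + 1 ∨ a = a' + 1) → (b' = b ∨ b' = b + 1 ∨ b = b' + 1) →
      d a' b' ≠ d a b + 2 := by
    intro a b a' b' ha hb ha' hb' hA hB heq
    have hdist : dist (Stmt17.g N a b) (Stmt17.g N a' b') ≤ 1 / N := Stmt17.g_dist N hN1 hA hB
    have h4 : ∀ x : ZMod 4, x = 0 ∨ x = 1 ∨ x = 2 ∨ x = 3 := by decide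
    have h5 := min_le_left δ₀ δ₁
    have h6 := min_le_right δ₀ δ₁
    rcases h4 (d a b) with h | h | h | h
    · rw [h, show (0:ZMod 4) + 2 = 2 by decide] at heq
      have m1 := hd0 a b h
      have m2 := hd2 a' b' heq
      have hle := hd₀ _ m2 _ m1
      rw [dist_comm] at hle
      linarith [le_trans hle hdist]
    · rw [h, show (1:ZMod 4) + 2 = 3 by decide] at heq
      have m1 := hd1 a b ha hb h
      have m2 := hd3 a' b' heq
      have hle := hd₁ _ m2 _ m1
      rw [dist_comm] at hle
      linarith [le_trans hle hdist]
    · rw [h, show (2:ZMod 4) + 2 = 0 by decide] at heq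
      have m1 := hd2 a b h
      have m2 := hd0 a' b' heq
      have hle := hd₀ _ m1 _ m2
      linarith [le_trans hle hdist]
    · rw [h, show (3:ZMod 4) + 2 = 1 by decide] at heq
      have m1 := hd3 a b h
      have m2 := hd1 a' b' ha' hb' heq
      have hle := hd₁ _ m1 _ m2
      linarith [le_trans hle hdist]
  exact Stmt17.grid_false N hN1 d hadj hl hr hbt htp
end
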